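/- arXiv:1302.1452 — 2 statements merged into one kernel-verified Lean document; each statement's English description precedes it below -/
import Mathlib

section
/- Perron's discontinuous integral: for c > 0 and y > 0, the contour integral (1/(2πi)) ∫_{c-i∞}^{c+i∞} y^s ds/s equals 0 if 0 < y < 1, equals 1/2 if y = 1, and equals 1 if y > 1. -/
set_option maxHeartbeats 1000000

open Complex Filter Set MeasureTheory intervalIntegral Topology

noncomputable section

namespace PerronAux

/-- vertical integral of `exp(a s)/s` along `Re s = σ` from `-T` to `T`. -/
def V (a σ T : ℝ) : ℂ := ∫ t : ℝ in (-T)..T, Complex.exp (a * (σ + t * I)) / (σ + t * I)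

lemma line_ne {σ : ℝ} (hσ : σ ≠ 0) (t : ℝ) : (σ : ℂ) + t * I ≠ 0 := by
  intro h
  apply hσ
  simpa using congrArg Complex.re h

lemma cont_line (a : ℝ) {σ : ℝ} (hσ : σ ≠ 0) :
    Continuous fun t : ℝ => Complex.exp (a * (σ + t * I)) / (σ + t * I) := by
  have h1 : Continuous fun t : ℝ => (σ : ℂ) + t * I :=
    continuous_const.add (Complex.continuous_ofReal.mul continuous_const)
  exact (Complex.continuous_exp.comp (continuous_const.mul h1)).div h1 fun t => line_ne hσ t

lemma norm_f (a : ℝ) (s : ℂ) :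
    ‖Complex.exp (a * s) / s‖ = Real.exp (a * s.re) / ‖s‖ := by
  rw [norm_div, Complex.norm_exp]
  congr 2
  simp [Complex.mul_re]

lemma norm_f_le_of_im (a : ℝ) {s : ℂ} {T : ℝ} (hT : 0 < T) (him : T ≤ |s.im|) :
    ‖Complex.exp (a * s) / s‖ ≤ Real.exp (a * s.re) / T := by
  rw [norm_f]
  exact div_le_div_of_nonneg_left (Real.exp_pos _).le hT (him.trans (Complex.abs_im_le_norm s))

lemma norm_f_le_of_re (a : ℝ) {s : ℂ} {R : ℝ} (hR : 0 < R) (hre : R ≤ |s.re|) :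
    ‖Complex.exp (a * s) / s‖ ≤ Real.exp (a * s.re) / R := by
  rw [norm_f]
  exact div_le_div_of_nonneg_left (Real.exp_pos _).le hR (hre.trans (Complex.abs_re_le_norm s))

lemma integral_exp_mul' (a σ₁ σ₂ : ℝ) (ha : a ≠ 0) :
    (∫ x in σ₁..σ₂, Real.exp (a * x)) = (Real.exp (a * σ₂) - Real.exp (a * σ₁)) / a := by
  rw [intervalIntegral.integral_comp_mul_left Real.exp ha, integral_exp, smul_eq_mul]
  ring

/-- The rectangle identity for `exp(a s)/s` on `[σ₁, σ₂] × [-T, T]` when `0 < σ₁`. -/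
lemma rect_identity (a : ℝ) {σ₁ σ₂ : ℝ} (T : ℝ) (h1 : 0 < σ₁) (h12 : σ₁ ≤ σ₂) :
    (∫ x : ℝ in σ₁..σ₂, Complex.exp (a * (x + (-T : ℝ) * I)) / (x + (-T : ℝ) * I)) -
      (∫ x : ℝ in σ₁..σ₂, Complex.exp (a * (x + T * I)) / (x + T * I)) +
      I • V a σ₂ T - I • V a σ₁ T = 0 := by
  have h := Complex.integral_boundary_rect_eq_zero_of_differentiableOn
      (fun s => Complex.exp (a * s) / s) ⟨σ₁, -T⟩ ⟨σ₂, T⟩ ?_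
  · simpa [V] using h
  · intro s hs
    rw [Complex.mem_reProdIm] at hs
    have hsre : σ₁ ≤ s.re := by
      have h2 := hs.1
      rw [show (Complex.mk σ₁ (-T)).re = σ₁ from rfl,
        show (Complex.mk σ₂ T).re = σ₂ from rfl, uIcc_of_le h12] at h2
      exact h2.1
    have hs0 : s ≠ 0 := by
      intro h0
      rw [h0] at hsre
      simp only [Complex.zero_re] at hsre
      linarith
    exact ((Complex.differentiable_exp.comp
      ((differentiable_const _).mul differentiable_id)).differentiableAt.div
      differentiableAt_id hs0).differentiableWithinAt

/-- Vertical integral tends to 0 when `a < 0`. -/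
lemma tendsto_V_zero {a c : ℝ} (ha : a < 0) (hc : 0 < c) :
    Tendsto (fun T => V a c T) atTop (𝓝 0) := by
  set K : ℝ := 2 * (Real.exp (a * c) / (-a)) with hK
  have key : ∀ T : ℝ, 0 < T → ‖V a c T‖ ≤ K / T := by
    intro T hT
    have hbound : ∀ R : ℝ, max c 1 ≤ R →
        ‖V a c T‖ ≤ K / T + Real.exp (a * R) / R * (2 * T) := by
      intro R hRc
      have hcR : c ≤ R := le_trans (le_max_left _ _) hRc
      have hR0 : (0:ℝ) < R := lt_of_lt_of_le one_pos (le_trans (le_max_right _ _) hRc)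
      have hrect := rect_identity a T hc hcR
      have hVc : I • V a c T =
          (∫ x : ℝ in c..R, Complex.exp (a * (x + (-T : ℝ) * I)) / (x + (-T : ℝ) * I)) -
          (∫ x : ℝ in c..R, Complex.exp (a * (x + T * I)) / (x + T * I)) + I • V a R T := by
        linear_combination -hrect
      -- horizontal bound
      have hH : ∀ e : ℝ, |e| = T →
          ‖∫ x : ℝ in c..R, Complex.exp (a * (x + (e : ℝ) * I)) / (x + (e : ℝ) * I)‖ ≤
            Real.exp (a * c) / (-a) / T := by
        intro e he
        have hle : ‖∫ x : ℝ in c..R, Complex.exp (a * (x + (e : ℝ) * I)) / (x + (e : ℝ) * I)‖ ≤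
            |∫ x : ℝ in c..R, Real.exp (a * x) / T| := by
          apply intervalIntegral.norm_integral_le_abs_of_norm_le
          · refine (ae_restrict_iff' measurableSet_Ioc).2 (Filter.Eventually.of_forall ?_)
            intro x _
            have h1 := norm_f_le_of_im a (s := (x : ℂ) + (e : ℝ) * I) hT
              (by simp [he.symm.le, he])
            simpa using h1
          · exact ((Real.continuous_exp.comp (continuous_const.mul continuous_id)).div_const
              T).intervalIntegrable _ _
        have hexpRc : Real.exp (a * R) ≤ Real.exp (a * c) :=
          Real.exp_le_exp.2 (mul_le_mul_of_nonpos_left hcR ha.le)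
        have heq : (∫ x : ℝ in c..R, Real.exp (a * x) / T) =
            (Real.exp (a * c) - Real.exp (a * R)) / (-a) / T := by
          rw [intervalIntegral.integral_div, integral_exp_mul' a c R ha.ne]
          ring
        rw [heq] at hle
        refine hle.trans ?_
        rw [_root_.abs_of_nonneg (by
          apply div_nonneg (div_nonneg (by linarith) (by linarith)) hT.le)]
        apply div_le_div_of_nonneg_right ?_ hT.le
        apply div_le_div_of_nonneg_right ?_ (by linarith)
        linarith [Real.exp_pos (a * R)]
      -- vertical at R bound
      have hVR : ‖V a R T‖ ≤ Real.exp (a * R) / R * (2 * T) := by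
        have h1 : ‖V a R T‖ ≤ Real.exp (a * R) / R * |T - (-T)| := by
          apply intervalIntegral.norm_integral_le_of_norm_le_const
          intro t _
          have h2 := norm_f_le_of_re a (s := (R : ℂ) + t * I) hR0 (by simp [_root_.abs_of_pos hR0])
          simpa using h2
        rwa [show |T - (-T)| = 2 * T by rw [_root_.abs_of_pos (by linarith)]; ring] at h1
      calc ‖V a c T‖ = ‖I • V a c T‖ := by rw [norm_smul, Complex.norm_I, one_mul]
        _ ≤ Real.exp (a * c) / (-a) / T + Real.exp (a * c) / (-a) / T
            + Real.exp (a * R) / R * (2 * T) := by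
            rw [hVc]
            refine (norm_add_le _ _).trans ?_
            have hsm : ‖I • V a R T‖ = ‖V a R T‖ := by rw [norm_smul, Complex.norm_I, one_mul]
            refine add_le_add ((norm_sub_le _ _).trans (add_le_add (hH (-T) (by
              rw [_root_.abs_of_nonpos (by linarith)]; ring)) (hH T (_root_.abs_of_pos hT)))) ?_
            rw [hsm]; exact hVR
        _ = K / T + Real.exp (a * R) / R * (2 * T) := by rw [hK]; ring
    -- take R → ∞
    have hlim : Tendsto (fun R => K / T + Real.exp (a * R) / R * (2 * T)) atTop (𝓝 (K / T)) := by
      have hexp0 : Tendsto (fun R => Real.exp (a * R)) atTop (𝓝 0) := by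
        have h1 : Tendsto (fun R : ℝ => (-a) * R) atTop atTop :=
          Tendsto.const_mul_atTop (by linarith) tendsto_id
        have h2 := Real.tendsto_exp_neg_atTop_nhds_zero.comp h1
        simpa [Function.comp_def, neg_mul] using h2
      have hinv : Tendsto (fun R : ℝ => R⁻¹) atTop (𝓝 0) := tendsto_inv_atTop_zero
      have h3 : Tendsto (fun R => Real.exp (a * R) / R * (2 * T)) atTop (𝓝 0) := by
        have := (hexp0.mul hinv).mul_const (2 * T)
        simpa [div_eq_mul_inv] using this
      simpa using tendsto_const_nhds.add h3
    exact ge_of_tendsto hlim (Filter.eventually_atTop.2 ⟨max c 1, hbound⟩)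
  have hKT : Tendsto (fun T : ℝ => K / T) atTop (𝓝 0) := by
    have := tendsto_inv_atTop_zero.const_mul K
    simpa [div_eq_mul_inv] using this
  apply squeeze_zero_norm' ?_ hKT
  exact (Filter.eventually_gt_atTop 0).mono key

lemma inv_sub_inv_line {c : ℝ} (hc : 0 < c) (t : ℝ) :
    ((c : ℂ) + t * I)⁻¹ - (((-c : ℝ) : ℂ) + t * I)⁻¹ = ((2 * c / (c ^ 2 + t ^ 2) : ℝ) : ℂ) := by
  have h1 : (c : ℂ) + t * I ≠ 0 := line_ne hc.ne' t
  have h2 : ((-c : ℝ) : ℂ) + t * I ≠ 0 := line_ne (neg_ne_zero.2 hc.ne') t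
  have hnum : ((-c : ℝ) : ℂ) + t * I - ((c : ℂ) + t * I) = -(2 * c) := by push_cast; ring
  have hden : ((c : ℂ) + t * I) * (((-c : ℝ) : ℂ) + t * I) = -(((c : ℝ) ^ 2 + t ^ 2 : ℝ) : ℂ) := by
    push_cast
    ring_nf
    rw [Complex.I_sq]
    ring
  rw [inv_sub_inv h1 h2, hnum, hden, neg_div_neg_eq, Complex.ofReal_div]
  push_cast
  ring

lemma integral_lorentz {c : ℝ} (hc : 0 < c) (T : ℝ) :
    (∫ t in (-T)..T, 2 * c / (c ^ 2 + t ^ 2)) = 4 * Real.arctan (T / c) := by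
  have h1 : ∀ t : ℝ, 2 * c / (c ^ 2 + t ^ 2) = (2 / c) * (1 + (t / c) ^ 2)⁻¹ := by
    intro t
    have : c ^ 2 + t ^ 2 ≠ 0 := by positivity
    field_simp
  rw [intervalIntegral.integral_congr (g := fun t : ℝ => (2 / c) * (1 + (t / c) ^ 2)⁻¹)
    (fun t _ => h1 t), intervalIntegral.integral_const_mul,
    intervalIntegral.integral_comp_div (f := fun u : ℝ => (1 + u ^ 2)⁻¹) hc.ne',
    integral_inv_one_add_sq, smul_eq_mul, show -T / c = -(T / c) by ring, Real.arctan_neg]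
  field_simp
  ring

lemma V_neg_sigma (a c T : ℝ) : V a (-c) T = - V (-a) c T := by
  rw [V, V]
  have h := intervalIntegral.integral_comp_neg (a := -T) (b := T)
    (fun t : ℝ => Complex.exp (a * ((-c : ℝ) + t * I)) / ((-c : ℝ) + t * I))
  simp only [neg_neg] at h
  rw [← h, ← intervalIntegral.integral_neg]
  apply intervalIntegral.integral_congr
  intro t _
  have h1 : ((-c : ℝ) : ℂ) + ((-t : ℝ) : ℂ) * I = -((c : ℂ) + t * I) := by push_cast; ring
  dsimp only
  rw [h1, div_neg, show ((a : ℂ) * -((c : ℂ) + t * I)) = (((-a : ℝ) : ℂ) * ((c : ℂ) + t * I)) by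
    push_cast; ring]

lemma tendsto_sum (a : ℝ) {c : ℝ} (hc : 0 < c) :
    Tendsto (fun T => I • V a c T + I • V (-a) c T) atTop (𝓝 (2 * Real.pi * I)) := by
  set f₀ : ℂ → ℂ := fun s => (Complex.exp (a * s) - 1) / s with hf₀
  set g : ℂ → ℂ := Function.update f₀ 0 (limUnder (𝓝[≠] (0 : ℂ)) f₀) with hg
  have hd0 : DifferentiableOn ℂ f₀ (univ \ {0}) := by
    intro s hs
    exact (((Complex.differentiable_exp.comp
      ((differentiable_const _).mul differentiable_id)).sub_const 1).differentiableAt.div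
      differentiableAt_id (fun h => hs.2 (by simpa using h))).differentiableWithinAt
  have hlim0 : Tendsto f₀ (𝓝[≠] (0 : ℂ)) (𝓝 (a : ℂ)) := by
    have h := (((hasDerivAt_id (0 : ℂ)).const_mul (a : ℂ)).cexp)
    rw [hasDerivAt_iff_tendsto_slope] at h
    have heq : ∀ᶠ z in 𝓝[≠] (0 : ℂ), slope (fun z => Complex.exp (a * z)) 0 z = f₀ z := by
      filter_upwards [self_mem_nhdsWithin] with z hz
      rw [slope_def_field, hf₀]
      simp
    have h2 := h.congr' heq
    simpa using h2
  have hgd : Differentiable ℂ g := by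
    rw [← differentiableOn_univ]
    exact Complex.differentiableOn_update_limUnder_of_isLittleO univ_mem hd0
      (Filter.IsBoundedUnder.isLittleO_sub_self_inv (hlim0.sub_const (f₀ 0)).norm.isBoundedUnder_le)
  have hdecomp : ∀ σ : ℝ, σ ≠ 0 → ∀ T : ℝ,
      V a σ T = (∫ t in (-T)..T, g (σ + t * I)) + ∫ t in (-T)..T, ((σ : ℂ) + t * I)⁻¹ := by
    intro σ hσ T
    have hcont1 : Continuous fun t : ℝ => (σ : ℂ) + t * I :=
      continuous_const.add (Complex.continuous_ofReal.mul continuous_const)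
    have hi1 : IntervalIntegrable (fun t : ℝ => g ((σ : ℂ) + t * I)) volume (-T) T :=
      (hgd.continuous.comp hcont1).intervalIntegrable _ _
    have hi2 : IntervalIntegrable (fun t : ℝ => ((σ : ℂ) + t * I)⁻¹) volume (-T) T :=
      (hcont1.inv₀ fun t => line_ne hσ t).intervalIntegrable _ _
    rw [V, ← intervalIntegral.integral_add hi1 hi2]
    apply intervalIntegral.integral_congr
    intro t _
    have h0 : (σ : ℂ) + t * I ≠ 0 := line_ne hσ t
    dsimp only
    rw [hg, Function.update_of_ne h0, hf₀]
    field_simp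
    ring
  have hrectg : ∀ T : ℝ,
      I • (∫ t in (-T)..T, g (c + t * I)) - I • (∫ t in (-T)..T, g ((-c : ℝ) + t * I)) =
      (∫ x : ℝ in (-c)..c, g (x + T * I)) - ∫ x : ℝ in (-c)..c, g (x + (-T : ℝ) * I) := by
    intro T
    have h := Complex.integral_boundary_rect_eq_zero_of_differentiableOn g ⟨-c, -T⟩ ⟨c, T⟩
      hgd.differentiableOn
    simp only [show (Complex.mk (-c) (-T)).re = -c from rfl,
      show (Complex.mk (-c) (-T)).im = -T from rfl,
      show (Complex.mk c T).re = c from rfl, show (Complex.mk c T).im = T from rfl,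
      smul_eq_mul] at h
    simp only [smul_eq_mul]
    linear_combination h
  have hC : (0 : ℝ) ≤ ∫ x in (-c)..c, (Real.exp (a * x) + 1) :=
    intervalIntegral.integral_nonneg (by linarith) (fun x _ => by positivity)
  have hgbound : ∀ T : ℝ, 0 < T → ∀ e : ℝ, |e| = T →
      ‖∫ x : ℝ in (-c)..c, g (x + (e : ℝ) * I)‖ ≤
        (∫ x in (-c)..c, (Real.exp (a * x) + 1)) / T := by
    intro T hT e he
    have he0 : e ≠ 0 := by intro h; rw [h] at he; simp at he; linarith
    have hle : ‖∫ x : ℝ in (-c)..c, g (x + (e : ℝ) * I)‖ ≤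
        |∫ x in (-c)..c, (Real.exp (a * x) + 1) / T| := by
      apply intervalIntegral.norm_integral_le_abs_of_norm_le
      · refine (ae_restrict_iff' measurableSet_Ioc).2 (Filter.Eventually.of_forall ?_)
        intro x _
        have h0 : (x : ℂ) + (e : ℝ) * I ≠ 0 := by
          intro h
          apply he0
          simpa using congrArg Complex.im h
        rw [hg, Function.update_of_ne h0, hf₀, norm_div]
        have h1 : ‖Complex.exp (a * ((x : ℂ) + (e : ℝ) * I)) - 1‖ ≤ Real.exp (a * x) + 1 := by
          refine (norm_sub_le _ _).trans ?_
          have : ‖Complex.exp (a * ((x : ℂ) + (e : ℝ) * I))‖ = Real.exp (a * x) := by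
            rw [Complex.norm_exp]
            congr 1
            simp [Complex.mul_re]
          rw [this, norm_one]
        have h2 : T ≤ ‖(x : ℂ) + (e : ℝ) * I‖ := by
          refine le_trans ?_ (Complex.abs_im_le_norm _)
          simp [he]
        exact div_le_div₀ (by positivity) h1 hT h2
      · exact (((Real.continuous_exp.comp (continuous_const.mul continuous_id)).add
          continuous_const).div_const T).intervalIntegrable _ _
    rw [intervalIntegral.integral_div] at hle
    rwa [abs_div, _root_.abs_of_pos hT, _root_.abs_of_nonneg hC] at hle
  have hpart1 : Tendsto (fun T : ℝ => (∫ x : ℝ in (-c)..c, g (x + T * I)) -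
      ∫ x : ℝ in (-c)..c, g (x + (-T : ℝ) * I)) atTop (𝓝 0) := by
    set C := ∫ x in (-c)..c, (Real.exp (a * x) + 1) with hCdef
    have hlim : Tendsto (fun T : ℝ => 2 * C / T) atTop (𝓝 0) := by
      have := tendsto_inv_atTop_zero.const_mul (2 * C)
      simpa [div_eq_mul_inv] using this
    apply squeeze_zero_norm' ?_ hlim
    filter_upwards [eventually_gt_atTop 0] with T hT
    refine (norm_sub_le _ _).trans ?_
    have hb1 := hgbound T hT T (_root_.abs_of_pos hT)
    have hb2 := hgbound T hT (-T) (by rw [_root_.abs_of_nonpos (by linarith)]; ring)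
    calc ‖∫ x : ℝ in (-c)..c, g (x + T * I)‖ + ‖∫ x : ℝ in (-c)..c, g (x + (-T : ℝ) * I)‖
        ≤ C / T + C / T := add_le_add hb1 hb2
      _ = 2 * C / T := by ring
  have hinv : ∀ T : ℝ, I • (∫ t in (-T)..T, ((c : ℂ) + t * I)⁻¹) -
      I • (∫ t in (-T)..T, (((-c : ℝ) : ℂ) + t * I)⁻¹) =
      ((4 * Real.arctan (T / c) : ℝ) : ℂ) * I := by
    intro T
    have hcont1 : Continuous fun t : ℝ => (c : ℂ) + t * I :=
      continuous_const.add (Complex.continuous_ofReal.mul continuous_const)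
    have hcont2 : Continuous fun t : ℝ => ((-c : ℝ) : ℂ) + t * I :=
      continuous_const.add (Complex.continuous_ofReal.mul continuous_const)
    have hi1 : IntervalIntegrable (fun t : ℝ => ((c : ℂ) + t * I)⁻¹) volume (-T) T :=
      (hcont1.inv₀ fun t => line_ne hc.ne' t).intervalIntegrable _ _
    have hi2 : IntervalIntegrable (fun t : ℝ => (((-c : ℝ) : ℂ) + t * I)⁻¹) volume (-T) T :=
      (hcont2.inv₀ fun t => line_ne (neg_ne_zero.2 hc.ne') t).intervalIntegrable _ _
    rw [← smul_sub, ← intervalIntegral.integral_sub hi1 hi2,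
      intervalIntegral.integral_congr
        (g := fun t : ℝ => ((2 * c / (c ^ 2 + t ^ 2) : ℝ) : ℂ))
        (fun t _ => inv_sub_inv_line hc t),
      intervalIntegral.integral_ofReal, integral_lorentz hc T, smul_eq_mul]
    ring
  have key : ∀ T : ℝ, I • V a c T + I • V (-a) c T =
      ((∫ x : ℝ in (-c)..c, g (x + T * I)) - ∫ x : ℝ in (-c)..c, g (x + (-T : ℝ) * I))
      + ((4 * Real.arctan (T / c) : ℝ) : ℂ) * I := by
    intro T
    have hsym : V (-a) c T = - V a (-c) T := by
      rw [V_neg_sigma a c T]  -- V a (-c) T = - V (-a) c T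
      ring
    rw [hsym, smul_neg, hdecomp c hc.ne' T, hdecomp (-c) (neg_ne_zero.2 hc.ne') T]
    have h1 := hrectg T
    have h2 := hinv T
    simp only [smul_eq_mul] at h1 h2 ⊢
    linear_combination h1 + h2
  have harct : Tendsto (fun T : ℝ => Real.arctan (T / c)) atTop (𝓝 (Real.pi / 2)) :=
    (tendsto_nhds_of_tendsto_nhdsWithin Real.tendsto_arctan_atTop).comp
      (Tendsto.atTop_div_const hc tendsto_id)
  have harct2 : Tendsto (fun T : ℝ => ((4 * Real.arctan (T / c) : ℝ) : ℂ) * I) atTop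
      (𝓝 (((4 * (Real.pi / 2) : ℝ) : ℂ) * I)) :=
    ((Complex.continuous_ofReal.tendsto _).comp (harct.const_mul 4)).mul_const I
  have hfinal := hpart1.add harct2
  rw [zero_add] at hfinal
  have : (((4 * (Real.pi / 2) : ℝ) : ℂ) * I) = 2 * Real.pi * I := by push_cast; ring
  rw [this] at hfinal
  exact hfinal.congr fun T => (key T).symm

end PerronAux

open PerronAux

/-- Perron's discontinuous integral: for `c > 0` and `y > 0`, the principal-value
integral `(1/(2πi)) ∫_{c-i∞}^{c+i∞} y^s ds/s` equals `0` if `y < 1`, `1/2` if `y = 1`,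
and `1` if `y > 1`. -/
theorem perron_integral (c : ℝ) (hc : 0 < c) (y : ℝ) (hy : 0 < y) :
    Tendsto
      (fun T : ℝ => (1 / (2 * Real.pi * I)) *
        ∫ t in (-T)..T, (y : ℂ) ^ ((c : ℂ) + I * t) / ((c : ℂ) + I * t) * I)
      atTop
      (nhds (if y < 1 then 0 else if y = 1 then (1 / 2 : ℂ) else 1)) := by
  have hy0 : (y : ℂ) ≠ 0 := Complex.ofReal_ne_zero.2 hy.ne'
  set a := Real.log y with ha
  have hfun : ∀ T : ℝ, (1 / (2 * Real.pi * I)) *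
      ∫ t in (-T)..T, (y : ℂ) ^ ((c : ℂ) + I * t) / ((c : ℂ) + I * t) * I
      = (1 / (2 * Real.pi * I)) * (V a c T * I) := by
    intro T
    congr 1
    rw [intervalIntegral.integral_mul_const, V]
    congr 1
    apply intervalIntegral.integral_congr
    intro t _
    dsimp only
    rw [show (c : ℂ) + I * t = (c : ℂ) + (t : ℂ) * I by ring]
    congr 1
    rw [Complex.cpow_def_of_ne_zero hy0, ← Complex.ofReal_log hy.le, ha]
  have hpi : ((Real.pi : ℝ) : ℂ) ≠ 0 := Complex.ofReal_ne_zero.2 Real.pi_ne_zero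
  rcases lt_trichotomy y 1 with h1 | h1 | h1
  · rw [if_pos h1]
    have ha0 : a < 0 := Real.log_neg hy h1
    have hV := tendsto_V_zero ha0 hc
    have h2 := (hV.mul_const I).const_mul (1 / (2 * Real.pi * I) : ℂ)
    simp only [zero_mul, mul_zero] at h2
    exact h2.congr fun T => (hfun T).symm
  · rw [if_neg (by simp [h1]), if_pos h1]
    have ha0 : a = 0 := by rw [ha, h1, Real.log_one]
    have hsum := tendsto_sum 0 hc
    rw [neg_zero] at hsum
    have h2 := hsum.const_mul (1 / (4 * Real.pi * I) : ℂ)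
    have hval : (1 / (4 * Real.pi * I) : ℂ) * (2 * Real.pi * I) = 1 / 2 := by
      field_simp
      ring
    rw [hval] at h2
    refine h2.congr fun T => ?_
    rw [hfun T, ha0]
    simp only [smul_eq_mul]
    field_simp
    ring
  · rw [if_neg (by linarith), if_neg h1.ne']
    have ha0 : 0 < a := Real.log_pos h1
    have hsum := tendsto_sum a hc
    have hV := tendsto_V_zero (neg_lt_zero.2 ha0) hc
    have h2 := hsum.sub (hV.const_mul I)
    simp only [mul_zero, sub_zero] at h2
    have h3 : Tendsto (fun T : ℝ => I * V a c T) atTop (𝓝 (2 * Real.pi * I)) := by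
      refine h2.congr fun T => ?_
      simp only [smul_eq_mul]
      ring
    have h4 := h3.const_mul (1 / (2 * Real.pi * I) : ℂ)
    have hval : (1 / (2 * Real.pi * I) : ℂ) * (2 * Real.pi * I) = 1 := by
      field_simp
    rw [hval] at h4
    refine h4.congr fun T => ?_
    rw [hfun T]
    ring
end
end

section
/- The identity ∏_{n=0}^∞ (1 - z^{2^n})^{-1} = ∏_{n=0}^∞ (1 + z^{2^n})^{n+1} holds for |z| < 1. -/
open Filter Finset Topology

private lemma myMultipliable (f : ℕ → ℂ) (hne : ∀ n, f n ≠ 0)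
    (h : Summable (fun n => ‖f n - 1‖)) : Multipliable f := by
  have hlog : Summable (fun n => Complex.log (f n)) := by
    have htd : Tendsto (fun n => ‖f n - 1‖) atTop (𝓝 0) := h.tendsto_atTop_zero
    have hev : ∀ᶠ n in atTop, ‖f n - 1‖ ≤ 1/2 :=
      htd.eventually (ge_mem_nhds (by norm_num : (0:ℝ) < 1/2))
    apply Summable.of_norm_bounded_eventually_nat (g := fun n => (3/2) * ‖f n - 1‖)
      (h.mul_left _)
    filter_upwards [hev] with n hn
    have := Complex.norm_log_one_add_half_le_self (z := f n - 1) hn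
    simpa using this
  exact Complex.multipliable_of_summable_log hlog

private lemma pow_one_add_sub_one_norm (w : ℂ) (hw : ‖w‖ ≤ 1) (m : ℕ) :
    ‖(1 + w) ^ m - 1‖ ≤ m * 2 ^ m * ‖w‖ := by
  induction m with
  | zero => simp
  | succ m ih =>
    have h0 : (0:ℝ) ≤ ‖w‖ := norm_nonneg _
    have h3 : (0:ℝ) ≤ (2:ℝ) ^ m := by positivity
    have h2 : ‖(1 + w) ^ m‖ ≤ 2 ^ m := by
      calc ‖(1 + w) ^ m‖ = ‖1 + w‖ ^ m := norm_pow _ _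
        _ ≤ 2 ^ m := by
            apply pow_le_pow_left₀ (norm_nonneg _)
            calc ‖1 + w‖ ≤ ‖(1:ℂ)‖ + ‖w‖ := norm_add_le _ _
              _ ≤ 2 := by rw [norm_one]; linarith
    have key : (1 + w) ^ (m+1) - 1 = ((1 + w) ^ m - 1) + w * (1 + w) ^ m := by ring
    have hp : (2:ℝ) ^ (m+1) = 2 ^ m * 2 := pow_succ 2 m
    calc ‖(1 + w) ^ (m+1) - 1‖ ≤ ‖(1 + w) ^ m - 1‖ + ‖w * (1 + w) ^ m‖ := by
          rw [key]; exact norm_add_le _ _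
      _ ≤ m * 2 ^ m * ‖w‖ + ‖w‖ * 2 ^ m := by
          gcongr
          rw [norm_mul]
          gcongr
      _ ≤ (↑(m+1)) * 2 ^ (m+1) * ‖w‖ := by
          push_cast
          rw [hp]
          nlinarith [mul_nonneg (mul_nonneg (Nat.cast_nonneg m : (0:ℝ) ≤ m) h3) h0,
            mul_nonneg h3 h0]

private lemma finite_key (z : ℂ) (hne : ∀ n : ℕ, (1 : ℂ) - z ^ 2 ^ n ≠ 0) (N : ℕ) :
    (∏ k ∈ range N, (1 - z ^ 2 ^ k)⁻¹) * (1 - z ^ 2 ^ N) ^ N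
      = ∏ k ∈ range N, (1 + z ^ 2 ^ k) ^ (k + 1) := by
  induction N with
  | zero => simp
  | succ N ih =>
    have hsplit : (1 : ℂ) - z ^ 2 ^ (N+1) = (1 - z ^ 2 ^ N) * (1 + z ^ 2 ^ N) := by
      have h2 : z ^ 2 ^ (N+1) = (z ^ 2 ^ N) ^ 2 := by
        rw [← pow_mul, pow_succ]
      rw [h2]; ring
    have hc : (1 - z ^ 2 ^ N)⁻¹ * (1 - z ^ 2 ^ N) ^ (N+1) = (1 - z ^ 2 ^ N) ^ N := by
      rw [pow_succ', ← mul_assoc, inv_mul_cancel₀ (hne N), one_mul]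
    rw [prod_range_succ, prod_range_succ, ← ih, hsplit, mul_pow]
    calc (∏ k ∈ range N, (1 - z ^ 2 ^ k)⁻¹) * (1 - z ^ 2 ^ N)⁻¹ *
          ((1 - z ^ 2 ^ N) ^ (N+1) * (1 + z ^ 2 ^ N) ^ (N+1))
        = (∏ k ∈ range N, (1 - z ^ 2 ^ k)⁻¹) *
            ((1 - z ^ 2 ^ N)⁻¹ * (1 - z ^ 2 ^ N) ^ (N+1)) * (1 + z ^ 2 ^ N) ^ (N+1) := by
          ring
      _ = (∏ k ∈ range N, (1 - z ^ 2 ^ k)⁻¹) * (1 - z ^ 2 ^ N) ^ N *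
            (1 + z ^ 2 ^ N) ^ (N+1) := by rw [hc]

/-- For `|z| < 1`, `∏_{n=0}^∞ (1 - z^{2^n})⁻¹ = ∏_{n=0}^∞ (1 + z^{2^n})^{n+1}`. -/
theorem feigenbaum_product_identity (z : ℂ) (hz : ‖z‖ < 1) :
    ∏' n : ℕ, (1 - z ^ 2 ^ n)⁻¹ = ∏' n : ℕ, (1 + z ^ 2 ^ n) ^ (n + 1) := by
  set r := ‖z‖ with hr
  have hr0 : 0 ≤ r := norm_nonneg z
  have hrn : ∀ n : ℕ, ‖z ^ 2 ^ n‖ = r ^ 2 ^ n := fun n => norm_pow _ _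
  have hlt : ∀ n : ℕ, r ^ 2 ^ n < 1 := by
    intro n
    calc r ^ 2 ^ n ≤ r ^ 1 := pow_le_pow_of_le_one hr0 hz.le Nat.one_le_two_pow
      _ < 1 := by simpa using hz
  have hne : ∀ n : ℕ, (1 : ℂ) - z ^ 2 ^ n ≠ 0 := by
    intro n h
    have h1 : z ^ 2 ^ n = 1 := by linear_combination -h
    have h2 := hlt n
    rw [← hrn n, h1] at h2
    simp at h2
  have hne' : ∀ n : ℕ, (1 : ℂ) + z ^ 2 ^ n ≠ 0 := by
    intro n h
    have h1 : z ^ 2 ^ n = -1 := by linear_combination h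
    have h2 := hlt n
    rw [← hrn n, h1] at h2
    simp at h2
  have S0 : Summable (fun n : ℕ => r ^ 2 ^ n) := by
    apply Summable.of_nonneg_of_le (fun n => by positivity)
      (fun n => pow_le_pow_of_le_one hr0 hz.le (Nat.le_of_lt (Nat.lt_two_pow_self (n := n))))
    exact summable_geometric_of_lt_one hr0 hz
  have hT0 : Tendsto (fun n : ℕ => r ^ 2 ^ n) atTop (𝓝 0) := S0.tendsto_atTop_zero
  have S1 : Summable (fun n : ℕ => ((n:ℝ) + 1) * 2 ^ n * r ^ 2 ^ n) := by
    apply summable_of_ratio_norm_eventually_le (r := 1/2) (by norm_num)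
    have hev : ∀ᶠ n : ℕ in atTop, r ^ 2 ^ n ≤ 1/8 :=
      hT0.eventually (ge_mem_nhds (by norm_num : (0:ℝ) < 1/8))
    filter_upwards [hev] with n hn
    have h1 : r ^ 2 ^ (n+1) = (r ^ 2 ^ n) ^ 2 := by rw [← pow_mul, pow_succ]
    have h2 : (0:ℝ) ≤ r ^ 2 ^ n := by positivity
    have h3 : (0:ℝ) ≤ (2:ℝ) ^ n := by positivity
    have hn0 : (0:ℝ) ≤ (n:ℝ) := Nat.cast_nonneg n
    rw [Real.norm_of_nonneg (by positivity), Real.norm_of_nonneg (by positivity), h1]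
    have ht2 : (r ^ 2 ^ n) ^ 2 ≤ (r ^ 2 ^ n) / 8 := by nlinarith
    calc ((↑(n+1):ℝ) + 1) * 2 ^ (n+1) * (r ^ 2 ^ n) ^ 2
        ≤ ((↑(n+1):ℝ) + 1) * 2 ^ (n+1) * ((r ^ 2 ^ n) / 8) := by
          gcongr
      _ ≤ 1/2 * (((n:ℝ) + 1) * 2 ^ n * r ^ 2 ^ n) := by
          rw [pow_succ]
          push_cast
          nlinarith [mul_nonneg h3 h2, mul_nonneg hn0 (mul_nonneg h3 h2)]
  have MA : Multipliable (fun n : ℕ => (1 - z ^ 2 ^ n)⁻¹) := by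
    have key : ∀ n : ℕ, ‖(1 - z ^ 2 ^ n)⁻¹ - 1‖ ≤ (1 - r)⁻¹ * r ^ 2 ^ n := by
      intro n
      have hinveq : (1 - z ^ 2 ^ n)⁻¹ - 1 = z ^ 2 ^ n * (1 - z ^ 2 ^ n)⁻¹ := by
        linear_combination inv_mul_cancel₀ (hne n)
      rw [hinveq, norm_mul, hrn n, norm_inv, mul_comm]
      have hle : r ^ 2 ^ n ≤ r := by
        calc r ^ 2 ^ n ≤ r ^ 1 := pow_le_pow_of_le_one hr0 hz.le Nat.one_le_two_pow
          _ = r := pow_one r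
      have hnorm : 1 - r ≤ ‖(1:ℂ) - z ^ 2 ^ n‖ := by
        have h := norm_sub_norm_le (1:ℂ) (z ^ 2 ^ n)
        rw [norm_one, hrn n] at h
        linarith
      gcongr <;> linarith
    exact myMultipliable _ (fun n => inv_ne_zero (hne n))
      (Summable.of_nonneg_of_le (fun n => norm_nonneg _) key (S0.mul_left _))
  have MB : Multipliable (fun n : ℕ => (1 + z ^ 2 ^ n) ^ (n + 1)) := by
    have key : ∀ n : ℕ, ‖(1 + z ^ 2 ^ n) ^ (n+1) - 1‖
        ≤ 2 * (((n:ℝ) + 1) * 2 ^ n * r ^ 2 ^ n) := by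
      intro n
      have h := pow_one_add_sub_one_norm (z ^ 2 ^ n) (by rw [hrn n]; exact (hlt n).le) (n+1)
      rw [hrn n] at h
      calc ‖(1 + z ^ 2 ^ n) ^ (n+1) - 1‖ ≤ (↑(n+1)) * 2 ^ (n+1) * r ^ 2 ^ n := h
        _ = 2 * (((n:ℝ) + 1) * 2 ^ n * r ^ 2 ^ n) := by push_cast; ring
    exact myMultipliable _ (fun n => pow_ne_zero _ (hne' n))
      (Summable.of_nonneg_of_le (fun n => norm_nonneg _) key (S1.mul_left 2))
  have hT : Tendsto (fun N : ℕ => ((1 : ℂ) - z ^ 2 ^ N) ^ N) atTop (𝓝 1) := by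
    rw [tendsto_iff_norm_sub_tendsto_zero]
    apply squeeze_zero (fun N => norm_nonneg _)
      (g := fun N : ℕ => ((N:ℝ) + 1) * 2 ^ N * r ^ 2 ^ N)
    · intro N
      have h1 : (1:ℂ) - z ^ 2 ^ N = 1 + (-(z ^ 2 ^ N)) := by ring
      have h := pow_one_add_sub_one_norm (-(z ^ 2 ^ N))
        (by rw [norm_neg, hrn N]; exact (hlt N).le) N
      rw [norm_neg, hrn N] at h
      rw [h1]
      refine h.trans ?_
      have h2 : (0:ℝ) ≤ r ^ 2 ^ N := by positivity
      have h3 : (0:ℝ) ≤ (2:ℝ) ^ N := by positivity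
      nlinarith [mul_nonneg h3 h2]
    · exact S1.tendsto_atTop_zero
  have hA : Tendsto (fun N : ℕ => ∏ k ∈ range N, (1 - z ^ 2 ^ k)⁻¹) atTop
      (𝓝 (∏' n : ℕ, (1 - z ^ 2 ^ n)⁻¹)) := MA.hasProd.tendsto_prod_nat
  have hB : Tendsto (fun N : ℕ => ∏ k ∈ range N, (1 + z ^ 2 ^ k) ^ (k+1)) atTop
      (𝓝 (∏' n : ℕ, (1 + z ^ 2 ^ n) ^ (n+1))) := MB.hasProd.tendsto_prod_nat
  have h2 : Tendsto (fun N : ℕ =>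
      (∏ k ∈ range N, (1 - z ^ 2 ^ k)⁻¹) * ((1 : ℂ) - z ^ 2 ^ N) ^ N) atTop
      (𝓝 ((∏' n : ℕ, (1 - z ^ 2 ^ n)⁻¹) * 1)) := hA.mul hT
  rw [mul_one] at h2
  have h3 : (fun N : ℕ => (∏ k ∈ range N, (1 - z ^ 2 ^ k)⁻¹) * ((1 : ℂ) - z ^ 2 ^ N) ^ N)
      = fun N : ℕ => ∏ k ∈ range N, (1 + z ^ 2 ^ k) ^ (k+1) :=
    funext (finite_key z hne)
  rw [h3] at h2
  exact tendsto_nhds_unique h2 hB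
end
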